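/- arXiv:2004.12694 — 3 statements merged into one kernel-verified Lean document; each statement's English description precedes it below -/
import Mathlib

section
/- Let L be a nondegenerate lattice and G ⊂ O(L) a subgroup of prime order p. Then the quotient group L/(L^G ⊕ L_G) is an elementary abelian p-group, i.e. isomorphic to (Z/pZ)^a for some a ≥ 0. -/
/-- If `G ⊂ O(L)` is generated by an isometry `g` of prime order `p` of a
nondegenerate lattice `L`, then the quotient `L/(L^G ⊕ L_G)` is an elementary abelian
`p`-group: every element of `L` multiplied by `p` lands in `L^G ⊕ L_G`
(where `L^G = Ker(g − id)` and `L_G = Ker(id + g + ⋯ + g^{p−1})`). -/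
theorem stmt3 {L : Type} [AddCommGroup L] [Module ℤ L] [Module.Free ℤ L] [Module.Finite ℤ L]
    (B : LinearMap.BilinForm ℤ L) (hsymm : ∀ x y, B x y = B y x)
    (hnd : ∀ x : L, (∀ y : L, B x y = 0) → x = 0)
    (p : ℕ) (hp : p.Prime)
    (g : L ≃ₗ[ℤ] L) (hiso : ∀ x y, B (g x) (g y) = B x y)
    (hord : g ^ p = 1) (hne : g ≠ 1) :
    ∀ x : L, (p : ℤ) • x ∈
      LinearMap.ker (g.toLinearMap - LinearMap.id) ⊔
        LinearMap.ker (∑ i ∈ Finset.range p, (g ^ i).toLinearMap) := by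
  intro x
  set S : L := ∑ i ∈ Finset.range p, (g ^ i) x with hSdef
  have hgS : g S = S := by
    have htel : ∑ i ∈ Finset.range p, ((g ^ (i + 1)) x - (g ^ i) x)
        = (g ^ p) x - (g ^ 0) x := Finset.sum_range_sub (fun i => (g ^ i) x) p
    have h0 : g S - S = 0 := by
      rw [hSdef, map_sum, ← Finset.sum_sub_distrib]
      have hc : ∀ i ∈ Finset.range p, g ((g ^ i) x) - (g ^ i) x
          = (g ^ (i + 1)) x - (g ^ i) x := by
        intro i _
        congr 1
        rw [pow_succ']
        rfl
      rw [Finset.sum_congr rfl hc, htel, hord, pow_zero]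
      simp
    exact sub_eq_zero.mp h0
  have hpowS : ∀ j : ℕ, (g ^ j) S = S := by
    intro j
    induction j with
    | zero => simp
    | succ n ih =>
      rw [pow_succ']
      show g ((g ^ n) S) = S
      rw [ih, hgS]
  -- S is in the first kernel
  have hS1 : S ∈ LinearMap.ker (g.toLinearMap - LinearMap.id) := by
    simp [LinearMap.mem_ker, LinearMap.sub_apply, hgS]
  -- p•x - S is in the second kernel
  have hS2 : (p : ℤ) • x - S ∈
      LinearMap.ker (∑ i ∈ Finset.range p, (g ^ i).toLinearMap) := by
    rw [LinearMap.mem_ker, map_sub, LinearMap.sum_apply, LinearMap.sum_apply]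
    have h1 : ∑ i ∈ Finset.range p, (g ^ i).toLinearMap ((p : ℤ) • x) = (p : ℤ) • S := by
      simp [hSdef, Finset.smul_sum]
    have h2 : ∑ i ∈ Finset.range p, (g ^ i).toLinearMap S = (p : ℤ) • S := by
      have : ∀ i ∈ Finset.range p, (g ^ i).toLinearMap S = S := fun i _ => hpowS i
      rw [Finset.sum_congr rfl this, Finset.sum_const, Finset.card_range]
      simp
    rw [h1, h2, sub_self]
  have : (p : ℤ) • x = S + ((p : ℤ) • x - S) := by abel
  rw [this]
  exact Submodule.add_mem_sup hS1 hS2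
end

section
/- Let L = U^{⊕3} ⊕ [−2]^{⊕2} and let G ⊂ O(L) be a subgroup of order 2 generated by φ whose induced action on the discriminant group L*/L ≅ (Z/2Z)² is trivial. Then both the coinvariant sublattice L_G = Ker(φ + id) and the invariant sublattice L^G = Ker(φ − id) are 2-elementary lattices. -/
/-- The discriminant group of a lattice: `Hom(L,ℤ)` modulo the image of `L` under
`x ↦ B(x,·)`. -/
noncomputable abbrev discQuot {M : Type} [AddCommGroup M] [Module ℤ M]
    (B : LinearMap.BilinForm ℤ M) :=
  (Module.Dual ℤ M) ⧸ LinearMap.range B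

/-- Restriction of a bilinear form to a submodule. -/
noncomputable def latRestrict {M : Type} [AddCommGroup M] [Module ℤ M]
    (B : LinearMap.BilinForm ℤ M) (W : Submodule ℤ M) : LinearMap.BilinForm ℤ W :=
  LinearMap.compl₁₂ B { W.subtype with map_smul' := fun c x => (int_smul_eq_zsmul _ c (x : M)).symm }
    { W.subtype with map_smul' := fun c x => (int_smul_eq_zsmul _ c (x : M)).symm }

/-- The Gram matrix of `L = U⊕U⊕U⊕[−2]⊕[−2]`. -/
def LGram : Matrix (Fin 8) (Fin 8) ℤ :=
  !![0,1,0,0,0,0,0,0;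
     1,0,0,0,0,0,0,0;
     0,0,0,1,0,0,0,0;
     0,0,1,0,0,0,0,0;
     0,0,0,0,0,1,0,0;
     0,0,0,0,1,0,0,0;
     0,0,0,0,0,0,-2,0;
     0,0,0,0,0,0,0,-2]

/-- The bilinear form of `L`. -/
noncomputable def BL : LinearMap.BilinForm ℤ (Fin 8 → ℤ) := Matrix.toLinearMap₂' ℤ LGram


open LinearMap Module

lemma latRestrict_apply {M : Type} [AddCommGroup M] [Module ℤ M]
    (B : LinearMap.BilinForm ℤ M) (W : Submodule ℤ M) (w y : W) :
    latRestrict B W w y = B (w : M) (y : M) := rfl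

section vecs
variable {α : Type*} (a b c d e f g h : α)
lemma cv0 : ![a,b,c,d,e,f,g,h] (0 : Fin 8) = a := rfl
lemma cv1 : ![a,b,c,d,e,f,g,h] (1 : Fin 8) = b := rfl
lemma cv2 : ![a,b,c,d,e,f,g,h] (2 : Fin 8) = c := rfl
lemma cv3 : ![a,b,c,d,e,f,g,h] (3 : Fin 8) = d := rfl
lemma cv4 : ![a,b,c,d,e,f,g,h] (4 : Fin 8) = e := rfl
lemma cv5 : ![a,b,c,d,e,f,g,h] (5 : Fin 8) = f := rfl
lemma cv6 : ![a,b,c,d,e,f,g,h] (6 : Fin 8) = g := rfl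
lemma cv7 : ![a,b,c,d,e,f,g,h] (7 : Fin 8) = h := rfl
end vecs

lemma BL_apply (x y : Fin 8 → ℤ) : BL x y =
    x 0 * y 1 + x 1 * y 0 + x 2 * y 3 + x 3 * y 2 + x 4 * y 5 + x 5 * y 4
      - 2 * x 6 * y 6 - 2 * x 7 * y 7 := by
  rw [BL, Matrix.toLinearMap₂'_apply]
  simp only [LGram, Matrix.of_apply, Fin.sum_univ_eight, cv0, cv1, cv2, cv3, cv4, cv5, cv6, cv7,
    smul_eq_mul]
  ring

lemma BL_nondeg {x : Fin 8 → ℤ} (h : ∀ y, BL x y = 0) : x = 0 := by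
  have h0 := h ![0,1,0,0,0,0,0,0]
  have h1 := h ![1,0,0,0,0,0,0,0]
  have h2 := h ![0,0,0,1,0,0,0,0]
  have h3 := h ![0,0,1,0,0,0,0,0]
  have h4 := h ![0,0,0,0,0,1,0,0]
  have h5 := h ![0,0,0,0,1,0,0,0]
  have h6 := h ![0,0,0,0,0,0,1,0]
  have h7 := h ![0,0,0,0,0,0,0,1]
  simp only [BL_apply, cv0, cv1, cv2, cv3, cv4, cv5, cv6, cv7] at h0 h1 h2 h3 h4 h5 h6 h7
  funext i
  fin_cases i <;> simp <;> omega

lemma two_rep (F : Module.Dual ℤ (Fin 8 → ℤ)) :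
    ∃ u : Fin 8 → ℤ, ∀ y, BL u y = 2 * F y := by
  set e : Fin 8 → (Fin 8 → ℤ) := fun i j => if i = j then 1 else 0 with he
  refine ⟨![2 * F (e 1), 2 * F (e 0), 2 * F (e 3), 2 * F (e 2), 2 * F (e 5), 2 * F (e 4),
    -F (e 6), -F (e 7)], ?_⟩
  intro y
  rw [LinearMap.pi_apply_eq_sum_univ F y, Finset.mul_sum, BL_apply]
  simp only [cv0, cv1, cv2, cv3, cv4, cv5, cv6, cv7, Fin.sum_univ_eight, smul_eq_mul]
  ring

lemma exists_extend_ker (ψ : (Fin 8 → ℤ) →ₗ[ℤ] (Fin 8 → ℤ)) (f : Module.Dual ℤ (LinearMap.ker ψ)) :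
    ∃ F : Module.Dual ℤ (Fin 8 → ℤ), ∀ y : LinearMap.ker ψ, F y = f y := by
  have hfree : Module.Free ℤ ((Fin 8 → ℤ) ⧸ LinearMap.ker ψ) :=
    Module.Free.of_equiv ψ.quotKerEquivRange.symm
  have hproj : Module.Projective ℤ ((Fin 8 → ℤ) ⧸ LinearMap.ker ψ) := Module.Projective.of_free
  obtain ⟨σ, hσ⟩ := Module.projective_lifting_property (LinearMap.ker ψ).mkQ LinearMap.id
    (Submodule.mkQ_surjective _)
  have hmem : ∀ x, x - σ ((LinearMap.ker ψ).mkQ x) ∈ LinearMap.ker ψ := by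
    intro x
    have h1 : (LinearMap.ker ψ).mkQ (x - σ ((LinearMap.ker ψ).mkQ x)) = 0 := by
      rw [map_sub, ← LinearMap.comp_apply, hσ]; simp
    rw [Submodule.mkQ_apply, Submodule.Quotient.mk_eq_zero] at h1
    exact h1
  refine ⟨f ∘ₗ ((LinearMap.id - σ ∘ₗ (LinearMap.ker ψ).mkQ).codRestrict _ (fun x => hmem x)), ?_⟩
  intro y
  have h0 : (LinearMap.ker ψ).mkQ (y : Fin 8 → ℤ) = 0 := by
    rw [Submodule.mkQ_apply, Submodule.Quotient.mk_eq_zero]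
    exact y.2
  simp only [LinearMap.comp_apply, LinearMap.codRestrict_apply]
  congr 1
  exact Subtype.ext (by simp [h0])

set_option maxHeartbeats 1600000 in
/-- Let `L = U^{⊕3} ⊕ [−2]^{⊕2}` and `G ⊂ O(L)` of order 2 generated by `φ`
acting trivially on the discriminant group `L*/L ≅ (ℤ/2ℤ)²` (i.e. for every `f ∈ L*` the
functional `f∘φ − f` lies in the image of `L`).  Then both the coinvariant sublattice
`L_G = Ker(φ + id)` and the invariant sublattice `L^G = Ker(φ − id)` are 2-elementary:
their discriminant groups are killed by 2. -/
theorem stmt8 (φ : (Fin 8 → ℤ) ≃ₗ[ℤ] (Fin 8 → ℤ))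
    (hiso : ∀ x y, BL (φ x) (φ y) = BL x y)
    (hord : φ * φ = 1) (hne : φ ≠ 1)
    (hdisc : ∀ f : Module.Dual ℤ (Fin 8 → ℤ),
      f ∘ₗ φ.toLinearMap - f ∈ LinearMap.range BL) :
    (∀ x : discQuot (latRestrict BL (LinearMap.ker (φ.toLinearMap + LinearMap.id))),
        2 • x = 0) ∧
    (∀ x : discQuot (latRestrict BL (LinearMap.ker (φ.toLinearMap - LinearMap.id))),
        2 • x = 0) := by
  have φφ : ∀ x, φ (φ x) = x := by
    intro x
    have := DFunLike.congr_fun hord x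
    simpa using this
  have hBφ : ∀ x y, BL (φ x) y = BL x (φ y) := by
    intro x y
    conv_lhs => rw [← φφ y]
    exact hiso x (φ y)
  constructor
  · intro x
    obtain ⟨f, rfl⟩ := Submodule.Quotient.mk_surjective _ x
    obtain ⟨F, hF⟩ := exists_extend_ker (φ.toLinearMap + LinearMap.id) f
    obtain ⟨v, hv⟩ := hdisc F
    have hv' : ∀ y, BL v y = F (φ y) - F y := by
      intro y
      have := DFunLike.congr_fun hv y
      simpa using this
    have hφv : φ v = -v := by
      have hz : φ v + v = 0 := by
        apply BL_nondeg
        intro y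
        have h1 : BL (φ v + v) y = BL v (φ y) + BL v y := by
          rw [map_add, LinearMap.add_apply, hBφ]
        rw [h1, hv', hv', φφ]
        ring
      exact eq_neg_of_add_eq_zero_left hz
    have hw : -v ∈ LinearMap.ker (φ.toLinearMap + LinearMap.id) := by
      rw [LinearMap.mem_ker, LinearMap.add_apply]
      simp [hφv]
    rw [two_smul, ← Submodule.Quotient.mk_add, Submodule.Quotient.mk_eq_zero]
    refine ⟨⟨-v, hw⟩, ?_⟩
    ext y
    have hy : φ (y : Fin 8 → ℤ) = -(y : Fin 8 → ℤ) := by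
      have h2 := y.2
      rw [LinearMap.mem_ker, LinearMap.add_apply] at h2
      have h3 : φ (y : Fin 8 → ℤ) + (y : Fin 8 → ℤ) = 0 := by simpa using h2
      exact eq_neg_of_add_eq_zero_left h3
    rw [latRestrict_apply]
    show BL (-v) (y : Fin 8 → ℤ) = f y + f y
    rw [map_neg, LinearMap.neg_apply, hv', hy, map_neg, hF y]
    ring
  · intro x
    obtain ⟨f, rfl⟩ := Submodule.Quotient.mk_surjective _ x
    obtain ⟨F, hF⟩ := exists_extend_ker (φ.toLinearMap - LinearMap.id) f
    obtain ⟨v, hv⟩ := hdisc F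
    have hv' : ∀ y, BL v y = F (φ y) - F y := by
      intro y
      have := DFunLike.congr_fun hv y
      simpa using this
    have hφv : φ v = -v := by
      have hz : φ v + v = 0 := by
        apply BL_nondeg
        intro y
        have h1 : BL (φ v + v) y = BL v (φ y) + BL v y := by
          rw [map_add, LinearMap.add_apply, hBφ]
        rw [h1, hv', hv', φφ]
        ring
      exact eq_neg_of_add_eq_zero_left hz
    obtain ⟨u, hu⟩ := two_rep F
    have hφu : φ u = u + v + v := by
      have hz : φ u - (u + v + v) = 0 := by
        apply BL_nondeg
        intro y
        have h1 : BL (φ u - (u + v + v)) y = BL u (φ y) - (BL u y + BL v y + BL v y) := by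
          rw [map_sub, LinearMap.sub_apply, hBφ, map_add, map_add, LinearMap.add_apply,
            LinearMap.add_apply]
        rw [h1, hu, hu, hv']
        ring
      exact sub_eq_zero.mp hz
    have hw : u + v ∈ LinearMap.ker (φ.toLinearMap - LinearMap.id) := by
      rw [LinearMap.mem_ker, LinearMap.sub_apply]
      have h4 : φ (u + v) = u + v := by rw [map_add, hφu, hφv]; abel
      have : φ (u + v) - (u + v) = 0 := by rw [h4]; abel
      simpa using this
    rw [two_smul, ← Submodule.Quotient.mk_add, Submodule.Quotient.mk_eq_zero]
    refine ⟨⟨u + v, hw⟩, ?_⟩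
    ext y
    have hy : φ (y : Fin 8 → ℤ) = (y : Fin 8 → ℤ) := by
      have h2 := y.2
      rw [LinearMap.mem_ker, LinearMap.sub_apply] at h2
      have h3 : φ (y : Fin 8 → ℤ) - (y : Fin 8 → ℤ) = 0 := by simpa using h2
      exact sub_eq_zero.mp h3
    rw [latRestrict_apply]
    show BL (u + v) (y : Fin 8 → ℤ) = f y + f y
    rw [map_add, LinearMap.add_apply, hu, hv', hy, hF y]
    ring
end

section
/- There is no primitive embedding of the lattice U(2) ⊕ U(2) ⊕ [−4] into L = U^{⊕3} ⊕ [−2]^{⊕2}. -/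
/-- The Gram matrix of `U(2) ⊕ U(2) ⊕ [−4]`. -/
def SGram : Matrix (Fin 5) (Fin 5) ℤ :=
  !![0,2,0,0,0;
     2,0,0,0,0;
     0,0,0,2,0;
     0,0,2,0,0;
     0,0,0,0,-4]

namespace Stmt11Aux

open Matrix LinearMap

abbrev K2 := ZMod 2

/-- `LGram` reduced mod 2. -/
def GK : Matrix (Fin 8) (Fin 8) K2 :=
  !![0,1,0,0,0,0,0,0;
     1,0,0,0,0,0,0,0;
     0,0,0,1,0,0,0,0;
     0,0,1,0,0,0,0,0;
     0,0,0,0,0,1,0,0;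
     0,0,0,0,1,0,0,0;
     0,0,0,0,0,0,0,0;
     0,0,0,0,0,0,0,0]

@[simp] lemma cv_3_2 {α : Type*} (a : α) (s : Fin 2 → α) : Matrix.vecCons a s (2 : Fin 3) = s 1 := rfl
@[simp] lemma cv_4_2 {α : Type*} (a : α) (s : Fin 3 → α) : Matrix.vecCons a s (2 : Fin 4) = s 1 := rfl
@[simp] lemma cv_4_3 {α : Type*} (a : α) (s : Fin 3 → α) : Matrix.vecCons a s (3 : Fin 4) = s 2 := rfl
@[simp] lemma cv_5_2 {α : Type*} (a : α) (s : Fin 4 → α) : Matrix.vecCons a s (2 : Fin 5) = s 1 := rfl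
@[simp] lemma cv_5_3 {α : Type*} (a : α) (s : Fin 4 → α) : Matrix.vecCons a s (3 : Fin 5) = s 2 := rfl
@[simp] lemma cv_5_4 {α : Type*} (a : α) (s : Fin 4 → α) : Matrix.vecCons a s (4 : Fin 5) = s 3 := rfl
@[simp] lemma cv_6_2 {α : Type*} (a : α) (s : Fin 5 → α) : Matrix.vecCons a s (2 : Fin 6) = s 1 := rfl
@[simp] lemma cv_6_3 {α : Type*} (a : α) (s : Fin 5 → α) : Matrix.vecCons a s (3 : Fin 6) = s 2 := rfl
@[simp] lemma cv_6_4 {α : Type*} (a : α) (s : Fin 5 → α) : Matrix.vecCons a s (4 : Fin 6) = s 3 := rfl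
@[simp] lemma cv_6_5 {α : Type*} (a : α) (s : Fin 5 → α) : Matrix.vecCons a s (5 : Fin 6) = s 4 := rfl
@[simp] lemma cv_7_2 {α : Type*} (a : α) (s : Fin 6 → α) : Matrix.vecCons a s (2 : Fin 7) = s 1 := rfl
@[simp] lemma cv_7_3 {α : Type*} (a : α) (s : Fin 6 → α) : Matrix.vecCons a s (3 : Fin 7) = s 2 := rfl
@[simp] lemma cv_7_4 {α : Type*} (a : α) (s : Fin 6 → α) : Matrix.vecCons a s (4 : Fin 7) = s 3 := rfl
@[simp] lemma cv_7_5 {α : Type*} (a : α) (s : Fin 6 → α) : Matrix.vecCons a s (5 : Fin 7) = s 4 := rfl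
@[simp] lemma cv_7_6 {α : Type*} (a : α) (s : Fin 6 → α) : Matrix.vecCons a s (6 : Fin 7) = s 5 := rfl
@[simp] lemma cv_8_2 {α : Type*} (a : α) (s : Fin 7 → α) : Matrix.vecCons a s (2 : Fin 8) = s 1 := rfl
@[simp] lemma cv_8_3 {α : Type*} (a : α) (s : Fin 7 → α) : Matrix.vecCons a s (3 : Fin 8) = s 2 := rfl
@[simp] lemma cv_8_4 {α : Type*} (a : α) (s : Fin 7 → α) : Matrix.vecCons a s (4 : Fin 8) = s 3 := rfl
@[simp] lemma cv_8_5 {α : Type*} (a : α) (s : Fin 7 → α) : Matrix.vecCons a s (5 : Fin 8) = s 4 := rfl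
@[simp] lemma cv_8_6 {α : Type*} (a : α) (s : Fin 7 → α) : Matrix.vecCons a s (6 : Fin 8) = s 5 := rfl
@[simp] lemma cv_8_7 {α : Type*} (a : α) (s : Fin 7 → α) : Matrix.vecCons a s (7 : Fin 8) = s 6 := rfl

lemma LGram_map : LGram.map (Int.cast : ℤ → K2) = GK := by decide
lemma SGram_map : SGram.map (Int.cast : ℤ → K2) = 0 := by decide

lemma valcast (z : K2) : (((z.val : ℤ)) : K2) = z := by
  push_cast
  exact ZMod.natCast_rightInverse z

/-- Kernel of `GK` forces the first six coordinates to vanish. -/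
lemma GK_ker_coords (v : Fin 8 → K2) (h : GK *ᵥ v = 0) :
    v 0 = 0 ∧ v 1 = 0 ∧ v 2 = 0 ∧ v 3 = 0 ∧ v 4 = 0 ∧ v 5 = 0 := by
  have h0 := congrFun h 0
  have h1 := congrFun h 1
  have h2 := congrFun h 2
  have h3 := congrFun h 3
  have h4 := congrFun h 4
  have h5 := congrFun h 5
  simp [GK, Matrix.mulVec, dotProduct, Fin.sum_univ_eight] at h0 h1 h2 h3 h4 h5
  exact ⟨h1, h0, h3, h2, h5, h4⟩

lemma GK_ker_finrank : Module.finrank K2 (LinearMap.ker GK.mulVecLin) ≤ 2 := by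
  set q : (Fin 8 → K2) →ₗ[K2] (Fin 2 → K2) := LinearMap.funLeft K2 K2 ![6,7] with hq
  have hinj : Function.Injective (q.domRestrict (LinearMap.ker GK.mulVecLin)) := by
    rw [← LinearMap.ker_eq_bot]
    rw [LinearMap.ker_eq_bot']
    rintro ⟨v, hv⟩ h0
    have hv' : GK *ᵥ v = 0 := by simpa [Matrix.mulVecLin_apply] using hv
    obtain ⟨e0, e1, e2, e3, e4, e5⟩ := GK_ker_coords v hv'
    have h6 : v 6 = 0 := congrFun h0 0
    have h7 : v 7 = 0 := congrFun h0 1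
    ext i
    fin_cases i <;> simpa using by assumption
  calc Module.finrank K2 (LinearMap.ker GK.mulVecLin)
      ≤ Module.finrank K2 (Fin 2 → K2) := LinearMap.finrank_le_finrank_of_injective hinj
    _ = 2 := Module.finrank_fin_fun K2

lemma e7_mem_ker : Pi.single (6 : Fin 8) (1 : K2) ∈ LinearMap.ker GK.mulVecLin := by
  simp only [LinearMap.mem_ker, Matrix.mulVecLin_apply]
  decide

end Stmt11Aux

open Stmt11Aux Matrix LinearMap

/-- There is no primitive embedding of the lattice `U(2) ⊕ U(2) ⊕ [−4]`
into `L = U^{⊕3} ⊕ [−2]^{⊕2}`. -/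
theorem stmt11 :
    ¬ ∃ f : (Fin 5 → ℤ) →ₗ[ℤ] (Fin 8 → ℤ),
        Function.Injective f ∧
        (∀ x y, Matrix.toLinearMap₂' ℤ SGram x y =
          Matrix.toLinearMap₂' ℤ LGram (f x) (f y)) ∧
        (∀ (v : Fin 8 → ℤ) (n : ℤ), n ≠ 0 → n • v ∈ LinearMap.range f →
          v ∈ LinearMap.range f) := by
  rintro ⟨f, hinj, hSL, hprim⟩
  classical
  set A : Matrix (Fin 8) (Fin 5) ℤ := LinearMap.toMatrix' f with hA
  have hfA : ∀ x, f x = A *ᵥ x := by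
    intro x
    rw [hA, ← Matrix.toLin'_apply, Matrix.toLin'_toMatrix']
  -- the Gram identity as a matrix identity
  have hmat : Aᵀ * (LGram * A) = SGram := by
    ext i j
    have h := (hSL (Pi.single i 1) (Pi.single j 1)).symm
    rw [Matrix.toLinearMap₂'_apply', Matrix.toLinearMap₂'_apply', hfA, hfA,
      Matrix.mulVec_mulVec, Matrix.dotProduct_mulVec, Matrix.vecMul_mulVec,
      Matrix.single_one_vecMul, dotProduct_single_one] at h
    rw [show (Aᵀ * (LGram * A)) i j = (Aᵀ * (LGram * A)).row i j from rfl, h]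
    simp
  -- reduction mod 2
  set M : Matrix (Fin 8) (Fin 5) K2 := A.map (Int.cast : ℤ → K2) with hM
  have hmatK : Mᵀ * (GK * M) = 0 := by
    have h2 := congrArg (fun B : Matrix (Fin 5) (Fin 5) ℤ =>
      B.map ((Int.castRingHom K2) : ℤ → K2)) hmat
    rw [Matrix.map_mul, Matrix.map_mul, Matrix.transpose_map] at h2
    rw [show ⇑(Int.castRingHom K2) = (Int.cast : ℤ → K2) from rfl] at h2
    rw [LGram_map, SGram_map] at h2
    exact h2
  have hcast : ∀ (x : Fin 5 → ℤ) (i : Fin 8),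
      ((f x i : ℤ) : K2) = (M *ᵥ fun j => ((x j : ℤ) : K2)) i := by
    intro x i
    rw [hfA]
    exact RingHom.map_mulVec (Int.castRingHom K2) A x i
  -- injectivity of M mod 2 (from primitivity)
  have hMker : ∀ c : Fin 5 → K2, M *ᵥ c = 0 → c = 0 := by
    intro c hc
    set a : Fin 5 → ℤ := fun j => ((c j).val : ℤ) with ha
    have hac : (fun j => ((a j : ℤ) : K2)) = c := by
      funext j
      exact valcast (c j)
    have heven : ∀ i, (2 : ℤ) ∣ f a i := by
      intro i
      have h0 : ((f a i : ℤ) : K2) = 0 := by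
        rw [hcast a i, hac, hc]
        rfl
      exact_mod_cast (ZMod.intCast_zmod_eq_zero_iff_dvd _ 2).mp h0
    choose v hv using heven
    have h2v : (2 : ℤ) • v ∈ LinearMap.range f :=
      ⟨a, by funext i; simp [hv i]⟩
    obtain ⟨t, ht⟩ := hprim v 2 (by norm_num) h2v
    have hat : a = (2 : ℤ) • t := by
      apply hinj
      rw [_root_.map_smul, ht]
      funext i
      simp [hv i]
    funext j
    have h1 : a j = 2 * t j := by rw [hat]; simp [mul_comm]
    have haj : a j = ((c j).val : ℤ) := rfl
    have h2 : ((c j).val : ℤ) < 2 := by exact_mod_cast ZMod.val_lt (c j)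
    have h3 : (0 : ℤ) ≤ ((c j).val : ℤ) := by positivity
    have h4 : ((c j).val : ℤ) = 0 := by omega
    have h5 : (c j).val = 0 := by exact_mod_cast h4
    simpa using (ZMod.val_eq_zero (c j)).mp h5
  have hMinj : Function.Injective M.mulVecLin :=
    LinearMap.ker_eq_bot.mp (LinearMap.ker_eq_bot'.mpr fun c hc => hMker c (by simpa using hc))
  -- rank bookkeeping
  have hrankM : M.rank = 5 := by
    rw [Matrix.rank, LinearMap.finrank_range_of_inj hMinj, Module.finrank_fin_fun]
  have hkerMt : Module.finrank K2 (LinearMap.ker Mᵀ.mulVecLin) = 3 := by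
    have h1 := LinearMap.finrank_range_add_finrank_ker Mᵀ.mulVecLin
    rw [Module.finrank_fin_fun] at h1
    have h5 : Module.finrank K2 (LinearMap.range Mᵀ.mulVecLin) = 5 := by
      have hh := Matrix.rank_transpose M
      rw [hrankM] at hh
      exact hh
    omega
  have hsub : LinearMap.range (GK * M).mulVecLin ≤ LinearMap.ker Mᵀ.mulVecLin := by
    rintro x ⟨y, rfl⟩
    simp only [LinearMap.mem_ker, Matrix.mulVecLin_apply, Matrix.mulVec_mulVec]
    rw [hmatK, Matrix.zero_mulVec]
  have hrange3 : Module.finrank K2 (LinearMap.range (GK * M).mulVecLin) ≤ 3 := by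
    rw [← hkerMt]
    exact Submodule.finrank_mono hsub
  have hker2 : 2 ≤ Module.finrank K2 (LinearMap.ker (GK * M).mulVecLin) := by
    have h1 := LinearMap.finrank_range_add_finrank_ker (GK * M).mulVecLin
    rw [Module.finrank_fin_fun] at h1
    omega
  -- the intersection of the image with ker GK is all of ker GK
  have hPVR : Submodule.map M.mulVecLin (LinearMap.ker (GK * M).mulVecLin)
      ≤ LinearMap.range M.mulVecLin ⊓ LinearMap.ker GK.mulVecLin := by
    rintro x ⟨y, hy, rfl⟩
    refine ⟨⟨y, rfl⟩, ?_⟩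
    show GK *ᵥ (M *ᵥ y) = 0
    rw [Matrix.mulVec_mulVec]
    exact LinearMap.mem_ker.mp hy
  have hPfin : Module.finrank K2
      (Submodule.map M.mulVecLin (LinearMap.ker (GK * M).mulVecLin))
      = Module.finrank K2 (LinearMap.ker (GK * M).mulVecLin) :=
    (LinearEquiv.finrank_eq (Submodule.equivMapOfInjective _ hMinj _)).symm
  have hVR : LinearMap.range M.mulVecLin ⊓ LinearMap.ker GK.mulVecLin
      = LinearMap.ker GK.mulVecLin := by
    apply Submodule.eq_of_le_of_finrank_le inf_le_right
    calc Module.finrank K2 (LinearMap.ker GK.mulVecLin) ≤ 2 := GK_ker_finrank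
      _ ≤ Module.finrank K2 (LinearMap.ker (GK * M).mulVecLin) := hker2
      _ = _ := hPfin.symm
      _ ≤ _ := Submodule.finrank_mono hPVR
  have he7V : Pi.single (6 : Fin 8) (1 : K2) ∈ LinearMap.range M.mulVecLin := by
    have : Pi.single (6 : Fin 8) (1 : K2)
        ∈ LinearMap.range M.mulVecLin ⊓ LinearMap.ker GK.mulVecLin := by
      rw [hVR]; exact e7_mem_ker
    exact this.1
  obtain ⟨c, hc⟩ := he7V
  -- lift to an integer vector and derive the contradiction mod 4
  set a : Fin 5 → ℤ := fun j => ((c j).val : ℤ) with ha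
  have hac : (fun j => ((a j : ℤ) : K2)) = c := by
    funext j
    exact valcast (c j)
  have hw : ∀ i, ((f a i : ℤ) : K2) = (Pi.single (6 : Fin 8) (1 : K2) : Fin 8 → K2) i := by
    intro i
    rw [hcast a i, hac]
    rw [show M *ᵥ c = Pi.single (6 : Fin 8) (1 : K2) from hc]
  have heven : ∀ i : Fin 8, i ≠ 6 → (2 : ℤ) ∣ f a i := by
    intro i hi
    have h0 : ((f a i : ℤ) : K2) = 0 := by rw [hw i, Pi.single_eq_of_ne hi]
    exact_mod_cast (ZMod.intCast_zmod_eq_zero_iff_dvd _ 2).mp h0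
  have hodd : ¬ (2 : ℤ) ∣ f a 6 := by
    intro hd
    have h0 : ((f a 6 : ℤ) : K2) = 0 := by
      exact_mod_cast (ZMod.intCast_zmod_eq_zero_iff_dvd _ 2).mpr (by exact_mod_cast hd)
    rw [hw 6] at h0
    simp at h0
  obtain ⟨b0, hb0⟩ := heven 0 (by decide)
  obtain ⟨b1, hb1⟩ := heven 1 (by decide)
  obtain ⟨b2, hb2⟩ := heven 2 (by decide)
  obtain ⟨b3, hb3⟩ := heven 3 (by decide)
  obtain ⟨b4, hb4⟩ := heven 4 (by decide)
  obtain ⟨b5, hb5⟩ := heven 5 (by decide)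
  obtain ⟨b7, hb7⟩ := heven 7 (by decide)
  obtain ⟨k, hk⟩ : ∃ k, f a 6 = 2 * k + 1 := by
    rcases Int.even_or_odd (f a 6) with he | ho
    · exact absurd he.two_dvd hodd
    · obtain ⟨k, hk⟩ := ho; exact ⟨k, hk⟩
  have E := hSL a a
  rw [Matrix.toLinearMap₂'_apply, Matrix.toLinearMap₂'_apply] at E
  simp only [Fin.sum_univ_five, Fin.sum_univ_eight, smul_eq_mul] at E
  rw [show SGram = !![0,2,0,0,0; 2,0,0,0,0; 0,0,0,2,0; 0,0,2,0,0; 0,0,0,0,-4] from rfl,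
    show LGram = !![0,1,0,0,0,0,0,0; 1,0,0,0,0,0,0,0; 0,0,0,1,0,0,0,0; 0,0,1,0,0,0,0,0;
      0,0,0,0,0,1,0,0; 0,0,0,0,1,0,0,0; 0,0,0,0,0,0,-2,0; 0,0,0,0,0,0,0,-2] from rfl] at E
  simp only [Matrix.of_apply, Matrix.cons_val_zero, Matrix.cons_val_one, Matrix.head_cons,
    Matrix.head_fin_const, Matrix.cons_val_fin_one, Matrix.cons_val', Matrix.empty_val',
    cv_8_2, cv_8_3, cv_8_4, cv_8_5, cv_8_6, cv_8_7,
    cv_7_2, cv_7_3, cv_7_4, cv_7_5, cv_7_6,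
    cv_6_2, cv_6_3, cv_6_4, cv_6_5,
    cv_5_2, cv_5_3, cv_5_4,
    cv_4_2, cv_4_3, cv_3_2] at E
  have E2 : 4 * (a 0 * a 1 + a 2 * a 3 - a 4 * a 4)
      = 2 * (f a 0 * f a 1 + f a 2 * f a 3 + f a 4 * f a 5)
        - 2 * (f a 6 * f a 6) - 2 * (f a 7 * f a 7) := by
    linear_combination E
  rw [hb0, hb1, hb2, hb3, hb4, hb5, hb7, hk] at E2
  have E3 : 4 * (a 0 * a 1 + a 2 * a 3 - a 4 * a 4)
      = 8 * (b0 * b1 + b2 * b3 + b4 * b5) - 8 * (k * k) - 8 * k - 2 - 8 * (b7 * b7) := by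
    linear_combination E2
  generalize a 0 * a 1 + a 2 * a 3 - a 4 * a 4 = X at E3
  generalize b0 * b1 + b2 * b3 + b4 * b5 = Y at E3
  generalize k * k = Z at E3
  generalize b7 * b7 = W at E3
  omega
end
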